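/- Let J be a q×q periodic Jacobi matrix with negative off-diagonal entries β₀,…,β_{q-1} < 0, and let J⁻ be obtained from J by replacing the corner entries β_{q-1} with -β_{q-1}. Then the characteristic polynomials satisfy det(J⁻ - λI) = det(J - λI) + 4·(-1)^q·β₀β₁⋯β_{q-1} for all λ ∈ ℝ. -/

import Mathlib

open Matrix Finset

set_option maxHeartbeats 1600000

private lemma sum_two {n : ℕ} (f : Fin n → ℝ) (a b : Fin n) (hab : a ≠ b)
    (h : ∀ k, k ≠ a → k ≠ b → f k = 0) : ∑ k, f k = f a + f b := by
  classical
  rw [← Finset.sum_pair hab]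
  refine (Finset.sum_subset (Finset.subset_univ _) ?_).symm
  intro x _ hx
  simp only [Finset.mem_insert, Finset.mem_singleton, not_or] at hx
  exact h x hx.1 hx.2

theorem det_companion_jacobi (m : ℕ) (α β : Fin (m + 3) → ℝ) (hβ : ∀ i, β i < 0)
    (J Jm : Matrix (Fin (m + 3)) (Fin (m + 3)) ℝ)
    (hJ : J = Matrix.of fun i j =>
      if i = j then α i
      else if j = i + 1 then β i
      else if i = j + 1 then β j
      else 0)
    (hJm : Jm = Matrix.of fun i j =>
      if (i = 0 ∧ j = Fin.last (m + 2)) ∨ (i = Fin.last (m + 2) ∧ j = 0) then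
        -β (Fin.last (m + 2))
      else J i j) :
    ∀ lam : ℝ,
      (Jm - lam • (1 : Matrix (Fin (m + 3)) (Fin (m + 3)) ℝ)).det =
        (J - lam • (1 : Matrix (Fin (m + 3)) (Fin (m + 3)) ℝ)).det +
          4 * (-1) ^ (m + 3) * ∏ i, β i := by
  intro lam
  classical
  set L : Fin (m + 3) := Fin.last (m + 2) with hLdef
  set b : ℝ := β L with hbdef
  set A : Matrix (Fin (m + 3)) (Fin (m + 3)) ℝ :=
    J - lam • (1 : Matrix (Fin (m + 3)) (Fin (m + 3)) ℝ) with hAdef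
  have hvL : (L : ℕ) = m + 2 := rfl
  have hL0 : L ≠ 0 := by
    simp [Fin.ext_iff, hvL]
  -- characterization of Fin successor equation by values
  have hv : ∀ x y : Fin (m + 3),
      y = x + 1 ↔ ((x : ℕ) < m + 2 ∧ (y : ℕ) = (x : ℕ) + 1) ∨
        ((x : ℕ) = m + 2 ∧ (y : ℕ) = 0) := by
    intro x y
    rw [Fin.ext_iff, Fin.val_add_one]
    have hx := x.isLt
    have hy := y.isLt
    constructor
    · intro h
      split at h
      · next he => simp only [Fin.ext_iff, Fin.val_last] at he; omega
      · next he => simp only [Fin.ext_iff, Fin.val_last] at he; omega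
    · intro h
      split
      · next he => simp only [Fin.ext_iff, Fin.val_last] at he; omega
      · next he => simp only [Fin.ext_iff, Fin.val_last] at he; omega
  -- entry formula for A
  have hAe : ∀ i j, A i j = if i = j then α i - lam
      else if j = i + 1 then β i else if i = j + 1 then β j else 0 := by
    intro i j
    by_cases h : i = j <;>
      simp [hAdef, hJ, Matrix.one_apply, h, Matrix.sub_apply, Matrix.smul_apply]
  -- entry values
  have hzero : ∀ i j : Fin (m + 3), (i : ℕ) ≠ (j : ℕ) → (j : ℕ) ≠ (i : ℕ) + 1 →
      (i : ℕ) ≠ (j : ℕ) + 1 → ¬((i : ℕ) = m + 2 ∧ (j : ℕ) = 0) →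
      ¬((j : ℕ) = m + 2 ∧ (i : ℕ) = 0) → A i j = 0 := by
    intro i j h1 h2 h3 h4 h5
    rw [hAe, if_neg (by simp only [Fin.ext_iff]; omega),
      if_neg (by rw [hv]; omega), if_neg (by rw [hv]; omega)]
  have hsup : ∀ i j : Fin (m + 3), (j : ℕ) = (i : ℕ) + 1 → A i j = β i := by
    intro i j h
    have hj := j.isLt
    rw [hAe, if_neg (by simp only [Fin.ext_iff]; omega),
      if_pos ((hv i j).2 (Or.inl ⟨by omega, h⟩))]
  have hsub : ∀ i j : Fin (m + 3), (i : ℕ) = (j : ℕ) + 1 → A i j = β j := by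
    intro i j h
    have hi := i.isLt
    rw [hAe, if_neg (by simp only [Fin.ext_iff]; omega),
      if_neg (by rw [hv]; omega), if_pos ((hv j i).2 (Or.inl ⟨by omega, h⟩))]
  have hc1 : A 0 L = b := by
    rw [hAe, if_neg (by simp only [Fin.ext_iff, hvL]; omega),
      if_neg (by rw [hv]; simp only [hvL, Fin.val_zero]; omega),
      if_pos ((hv L 0).2 (Or.inr ⟨hvL, rfl⟩))]
  have hc2 : A L 0 = b := by
    rw [hAe, if_neg (by simp only [Fin.ext_iff, hvL]; omega),
      if_pos ((hv L 0).2 (Or.inr ⟨hvL, rfl⟩))]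
  set u : Fin (m + 3) → ℝ := Pi.single L (-(2 * b)) with hudef
  set v : Fin (m + 3) → ℝ := Pi.single 0 (-(2 * b)) with hvvdef
  have key1 : Jm - lam • (1 : Matrix (Fin (m + 3)) (Fin (m + 3)) ℝ) =
      updateRow (updateRow A 0 (A 0 + u)) L (A L + v) := by
    ext i j
    rw [Matrix.updateRow_apply, Matrix.updateRow_apply]
    by_cases hiL : i = L
    · rw [if_pos hiL]
      subst hiL
      by_cases hj0 : j = 0
      · subst hj0
        have : (Jm - lam • (1 : Matrix (Fin (m + 3)) (Fin (m + 3)) ℝ)) L 0 = -b := by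
          simp [hJm, Matrix.sub_apply, Matrix.smul_apply, Matrix.one_apply, hL0, hbdef]
        rw [this, Pi.add_apply, hc2, hvvdef, Pi.single_eq_same]
        ring
      · have : (Jm - lam • (1 : Matrix (Fin (m + 3)) (Fin (m + 3)) ℝ)) L j = A L j := by
          simp [hJm, hAdef, Matrix.sub_apply, Matrix.smul_apply, hL0, hj0]
        rw [this, Pi.add_apply, hvvdef, Pi.single_eq_of_ne hj0, add_zero]
    · rw [if_neg hiL]
      by_cases hi0 : i = 0
      · rw [if_pos hi0]
        subst hi0
        by_cases hjL : j = L
        · subst hjL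
          have : (Jm - lam • (1 : Matrix (Fin (m + 3)) (Fin (m + 3)) ℝ)) 0 L = -b := by
            simp [hJm, Matrix.sub_apply, Matrix.smul_apply, Matrix.one_apply,
              (Ne.symm hL0 : (0 : Fin (m+3)) ≠ L), hbdef]
          rw [this, Pi.add_apply, hc1, hudef, Pi.single_eq_same]
          ring
        · have : (Jm - lam • (1 : Matrix (Fin (m + 3)) (Fin (m + 3)) ℝ)) 0 j = A 0 j := by
            simp [hJm, hAdef, Matrix.sub_apply, Matrix.smul_apply, hjL, hL0,
              (Ne.symm hL0 : (0 : Fin (m + 3)) ≠ L)]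
          rw [this, Pi.add_apply, hudef, Pi.single_eq_of_ne hjL, add_zero]
      · rw [if_neg hi0]
        simp [hJm, hAdef, Matrix.sub_apply, Matrix.smul_apply, hi0, hiL]
  -- multilinear expansion
  have hcomm : ∀ w z, updateRow (updateRow A 0 w) L z = updateRow (updateRow A L z) 0 w := by
    intro w z
    ext i j
    rw [Matrix.updateRow_apply, Matrix.updateRow_apply, Matrix.updateRow_apply,
      Matrix.updateRow_apply]
    by_cases h1 : i = L
    · simp [h1, hL0]
    · by_cases h2 : i = 0 <;> simp [h1, h2, (Ne.symm hL0 : (0 : Fin (m + 3)) ≠ L)]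
  have expand : (Jm - lam • (1 : Matrix (Fin (m + 3)) (Fin (m + 3)) ℝ)).det =
      A.det + (updateRow A 0 u).det + (updateRow A L v).det +
        (updateRow (updateRow A 0 u) L v).det := by
    have hC : updateRow A 0 (A 0 + u) L = A L := Matrix.updateRow_ne hL0
    have h0 : updateRow A L v 0 = A 0 := Matrix.updateRow_ne (Ne.symm hL0)
    rw [key1, det_updateRow_add]
    have t1 : (updateRow (updateRow A 0 (A 0 + u)) L (A L)).det =
        A.det + (updateRow A 0 u).det := by
      rw [← hC, Matrix.updateRow_eq_self, det_updateRow_add, Matrix.updateRow_eq_self]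
    have t2 : (updateRow (updateRow A 0 (A 0 + u)) L v).det =
        (updateRow A L v).det + (updateRow (updateRow A 0 u) L v).det := by
      rw [hcomm, det_updateRow_add, ← h0, Matrix.updateRow_eq_self, hcomm]
    rw [t1, t2]
    ring
  -- submatrices
  set M : Matrix (Fin (m + 2)) (Fin (m + 2)) ℝ := A.submatrix Fin.succ Fin.castSucc with hMdef
  set M' : Matrix (Fin (m + 2)) (Fin (m + 2)) ℝ := A.submatrix Fin.castSucc Fin.succ with hM'def
  set Dm : Matrix (Fin (m + 1)) (Fin (m + 1)) ℝ :=
    A.submatrix (fun i : Fin (m + 1) => (i.succ).castSucc)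
      (fun j : Fin (m + 1) => (j.succ).castSucc) with hDmdef
  set P : ℝ := ∏ i : Fin (m + 1), β ((i.succ).castSucc) with hPdef
  have husmul : u = (-(2 * b)) • (Pi.single L 1 : Fin (m + 3) → ℝ) := by
    ext x; by_cases h : x = L <;> simp [hudef, h]
  have hvsmul : v = (-(2 * b)) • (Pi.single 0 1 : Fin (m + 3) → ℝ) := by
    ext x; by_cases h : x = (0 : Fin (m + 3)) <;> simp [hvvdef, h]
  -- X0
  have cX0 : (updateRow A 0 u).det = -(2 * b) * ((-1) ^ (m + 2) * M.det) := by
    rw [husmul, det_updateRow_smul]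
    congr 1
    rw [Matrix.det_succ_row_zero,
      Fintype.sum_eq_single L (fun j hj => by
        simp [Matrix.updateRow_self, Pi.single_eq_of_ne hj])]
    have hsub1 : (updateRow A 0 (Pi.single L (1 : ℝ))).submatrix Fin.succ Fin.castSucc = M := by
      ext i j
      simp [Matrix.submatrix_apply, Matrix.updateRow_ne (Fin.succ_ne_zero i), hMdef]
    rw [hLdef, Fin.succAbove_last, hsub1]
    simp [Matrix.updateRow_self, hvL]
  -- triangular minors
  have hMtri : (M.submatrix Fin.succ Fin.succ).det = P := by
    rw [Matrix.det_of_upperTriangular (by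
      intro i j hij
      have hij' : (j : ℕ) < (i : ℕ) := hij
      simp only [Matrix.submatrix_apply, hMdef]
      have hi := i.isLt
      have hj := j.isLt
      apply hzero <;> simp only [Fin.val_succ, Fin.coe_castSucc] <;> omega)]
    refine Finset.prod_congr rfl fun i _ => ?_
    simp only [Matrix.submatrix_apply, hMdef]
    exact hsub _ _ (by simp)
  have hM'tri : (M'.submatrix Fin.succ Fin.succ).det = P := by
    rw [Matrix.det_of_lowerTriangular _ (by
      intro i j hij
      have hij' : (i : ℕ) < (j : ℕ) := hij
      simp only [Matrix.submatrix_apply, hM'def]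
      have hi := i.isLt
      have hj := j.isLt
      apply hzero <;> simp only [Fin.val_succ, Fin.coe_castSucc] <;> omega)]
    refine Finset.prod_congr rfl fun i _ => ?_
    simp only [Matrix.submatrix_apply, hM'def]
    exact hsup _ _ (by simp)
  have hDeq1 : M.submatrix Fin.castSucc Fin.succ = Dm := by
    ext i j
    simp only [Matrix.submatrix_apply, hMdef, hDmdef]
    congr 1 <;> exact Fin.ext (by simp)
  have hDeq2 : M'.submatrix Fin.succ Fin.castSucc = Dm := by
    ext i j
    simp only [Matrix.submatrix_apply, hM'def, hDmdef]
    congr 1 <;> exact Fin.ext (by simp)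
  have hlastsucc : (Fin.last (m + 1)).succ = L := by
    rw [hLdef]; exact Fin.ext (by simp)
  -- det M
  have cM : M.det = β 0 * P + (-1) ^ (m + 1) * (b * Dm.det) := by
    rw [Matrix.det_succ_column_zero,
      sum_two _ 0 (Fin.last (m + 1)) (by simp [Fin.ext_iff])
        (fun k hk0 hkl => by
          have h1 : (k : ℕ) ≠ 0 := fun h => hk0 (Fin.ext h)
          have h2 : (k : ℕ) ≠ m + 1 := by simpa [Fin.ext_iff] using hkl
          have hk := k.isLt
          have : M k 0 = 0 := by
            simp only [hMdef, Matrix.submatrix_apply]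
            apply hzero <;>
              simp only [Fin.val_succ, Fin.coe_castSucc, Fin.val_zero] <;> omega
          simp [this])]
    have e0 : M 0 0 = β 0 := by
      have : M 0 0 = β (Fin.castSucc 0) := by
        simp only [hMdef, Matrix.submatrix_apply]
        exact hsub _ _ (by simp)
      simpa using this
    have elast : M (Fin.last (m + 1)) 0 = b := by
      simp only [hMdef, Matrix.submatrix_apply, hlastsucc]
      simpa using hc2
    rw [e0, elast, Fin.succAbove_zero, Fin.succAbove_last, hMtri, hDeq1]
    simp [Fin.val_last]
    ring
  -- det M'
  have cM' : M'.det = β 0 * P + (-1) ^ (m + 1) * (b * Dm.det) := by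
    rw [Matrix.det_succ_row_zero,
      sum_two _ 0 (Fin.last (m + 1)) (by simp [Fin.ext_iff])
        (fun k hk0 hkl => by
          have h1 : (k : ℕ) ≠ 0 := fun h => hk0 (Fin.ext h)
          have h2 : (k : ℕ) ≠ m + 1 := by simpa [Fin.ext_iff] using hkl
          have hk := k.isLt
          have : M' 0 k = 0 := by
            simp only [hM'def, Matrix.submatrix_apply]
            apply hzero <;>
              simp only [Fin.val_succ, Fin.coe_castSucc, Fin.val_zero] <;> omega
          simp [this])]
    have e0 : M' 0 0 = β 0 := by
      have : M' 0 0 = β (Fin.castSucc 0) := by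
        simp only [hM'def, Matrix.submatrix_apply]
        exact hsup _ _ (by simp)
      simpa using this
    have elast : M' 0 (Fin.last (m + 1)) = b := by
      simp only [hM'def, Matrix.submatrix_apply, hlastsucc]
      simpa using hc1
    rw [e0, elast, Fin.succAbove_zero, Fin.succAbove_last, hM'tri, hDeq2]
    simp [Fin.val_last]
    ring
  -- Xl
  have hcastne : ∀ i : Fin (m + 2), Fin.castSucc i ≠ L := by
    intro i
    rw [hLdef]
    exact (Fin.castSucc_lt_last i).ne
  have cXl : (updateRow A L v).det = -(2 * b) * ((-1) ^ (m + 2) * M'.det) := by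
    rw [hvsmul, det_updateRow_smul]
    congr 1
    rw [Matrix.det_succ_row _ L,
      Fintype.sum_eq_single 0 (fun j hj => by
        simp [Matrix.updateRow_self, Pi.single_eq_of_ne hj])]
    have hsub1 : (updateRow A L (Pi.single 0 (1 : ℝ))).submatrix Fin.castSucc Fin.succ = M' := by
      ext i j
      simp only [Matrix.submatrix_apply, Matrix.updateRow_ne (hcastne i), hM'def]
    rw [hLdef, Fin.succAbove_last, Fin.succAbove_zero, hsub1]
    simp [Matrix.updateRow_self, Fin.val_last]
  -- Xq
  have cXq : (updateRow (updateRow A 0 u) L v).det =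
      -(2 * b) * ((-1) ^ (m + 2) * (-(2 * b) * ((-1) ^ (m + 1) * Dm.det))) := by
    rw [hcomm, husmul, det_updateRow_smul]
    congr 1
    rw [Matrix.det_succ_row_zero,
      Fintype.sum_eq_single L (fun j hj => by
        simp [Matrix.updateRow_self, Pi.single_eq_of_ne hj])]
    rw [hLdef, Fin.succAbove_last]
    have hR : (updateRow (updateRow A L v) 0 (Pi.single L (1 : ℝ))).submatrix
        Fin.succ Fin.castSucc = updateRow M (Fin.last (m + 1)) (Pi.single 0 (-(2 * b))) := by
      ext i j
      rw [Matrix.submatrix_apply, Matrix.updateRow_ne (Fin.succ_ne_zero i)]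
      by_cases h : i = Fin.last (m + 1)
      · subst h
        rw [hlastsucc, Matrix.updateRow_self, Matrix.updateRow_self]
        by_cases hj : j = 0
        · subst hj; simp [hvvdef]
        · rw [hvvdef, Pi.single_eq_of_ne (fun hc => hj (Fin.ext (by simpa using congrArg Fin.val hc))),
            Pi.single_eq_of_ne hj]
      · have hne : i.succ ≠ L := by
          rw [hLdef]
          exact fun hc => h (by
            apply Fin.ext
            have := congrArg Fin.val hc
            simpa using this)
        rw [Matrix.updateRow_ne hne, Matrix.updateRow_ne h]
        rfl
    rw [hR]
    have hsingle : (Pi.single 0 (-(2 * b)) : Fin (m + 2) → ℝ) =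
        (-(2 * b)) • (Pi.single 0 1 : Fin (m + 2) → ℝ) := by
      ext x
      by_cases h : x = (0 : Fin (m + 2))
      · subst h; simp
      · simp [h]
    rw [hsingle, det_updateRow_smul]
    rw [Matrix.det_succ_row _ (Fin.last (m + 1)),
      Fintype.sum_eq_single 0 (fun j hj => by
        simp [Matrix.updateRow_self, Pi.single_eq_of_ne hj])]
    have hsub2 : (updateRow M (Fin.last (m + 1)) (Pi.single 0 (1 : ℝ))).submatrix
        Fin.castSucc Fin.succ = M.submatrix Fin.castSucc Fin.succ := by
      ext i j
      rw [Matrix.submatrix_apply, Matrix.updateRow_ne (Fin.castSucc_lt_last i).ne,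
        Matrix.submatrix_apply]
    rw [Fin.succAbove_last, Fin.succAbove_zero, hsub2, hDeq1]
    simp [Matrix.updateRow_self, Fin.val_last, hvL]
  -- product
  have cProd : (∏ i, β i) = β 0 * P * b := by
    rw [Fin.prod_univ_castSucc (f := β),
      Fin.prod_univ_succ (f := fun i : Fin (m + 2) => β i.castSucc)]
    simp only [Fin.castSucc_zero, hPdef, hbdef, hLdef]
  have hp3 : ((-1 : ℝ)) ^ (m + 3) = (-1) ^ (m + 1) := by
    rw [show m + 3 = (m + 1) + 2 from rfl, pow_add]
    norm_num
  have hp2 : ((-1 : ℝ)) ^ (m + 2) = (-1) ^ (m + 1) * (-1) := pow_succ _ _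
  rw [expand, cX0, cXl, cXq, cM, cM', cProd, hp3, hp2]
  ring
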